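/- Let R be a finite local ring with maximal ideal M of order m, and suppose |R| > 2m. Then the unitary Cayley graph G_R is Ramanujan (i.e., every adjacency eigenvalue other than ±|R^×| has absolute value at most 2√(|R^×| − 1)) if and only if |R| ≥ (m/2 + 1)^2. -/

import Mathlib

open Polynomial

open Polynomial

/-- The unitary Cayley graph of a finite commutative ring `R`. -/
def unitaryCayley (R : Type*) [CommRing R] [Fintype R] [DecidableEq R] : SimpleGraph R where
  Adj x y := x ≠ y ∧ IsUnit (x - y)
  symm := by
    constructor
    intro x y h
    exact ⟨h.1.symm, by simpa using h.2.neg⟩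
  loopless := ⟨fun x h => h.1 rfl⟩

instance unitaryCayley.instDecidableRel (R : Type*) [CommRing R] [Fintype R] [DecidableEq R] :
    DecidableRel (unitaryCayley R).Adj := fun a b =>
  decidable_of_iff (a ≠ b ∧ ∃ c, (a - b) * c = 1)
    (by exact and_congr Iff.rfl isUnit_iff_exists_inv.symm)

/-- An `r`-regular graph is Ramanujan if every adjacency eigenvalue other than `±r`
has absolute value at most `2 * sqrt (r - 1)`. -/
def IsRamanujan {V : Type*} [Fintype V] [DecidableEq V] (G : SimpleGraph V)
    [DecidableRel G.Adj] (r : ℕ) : Prop :=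
  ∀ μ ∈ (SimpleGraph.adjMatrix ℝ G).charpoly.roots,
    |μ| ≠ (r : ℝ) → |μ| ≤ 2 * Real.sqrt ((r : ℝ) - 1)

/-- The energy of a graph: the sum of absolute values of its adjacency eigenvalues. -/
noncomputable def graphEnergy {V : Type*} [Fintype V] [DecidableEq V] (G : SimpleGraph V)
    [DecidableRel G.Adj] : ℝ :=
  ((SimpleGraph.adjMatrix ℝ G).charpoly.roots.map (fun μ => |μ|)).sum

lemma eval_charpoly_aux {n R : Type*} [Fintype n] [DecidableEq n] [CommRing R]
    (A : Matrix n n R) (μ : R) :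
    A.charpoly.eval μ = (μ • (1 : Matrix n n R) - A).det := by
  rw [Matrix.charpoly, ← Polynomial.coe_evalRingHom, RingHom.map_det]
  congr 1
  ext i j
  by_cases h : i = j
  · subst h
    simp [Matrix.charmatrix_apply, Matrix.one_apply]
  · simp [Matrix.charmatrix_apply, Matrix.one_apply, h, Matrix.diagonal_apply]

/-- Roots of the characteristic polynomial of a real matrix are exactly the eigenvalues. -/
lemma mem_roots_charpoly_iff {n : Type*} [Fintype n] [DecidableEq n]
    (A : Matrix n n ℝ) (μ : ℝ) :
    μ ∈ A.charpoly.roots ↔ ∃ v : n → ℝ, v ≠ 0 ∧ A.mulVec v = μ • v := by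
  rw [Polynomial.mem_roots', Polynomial.IsRoot, eval_charpoly_aux]
  constructor
  · rintro ⟨-, hdet⟩
    obtain ⟨v, hv, hv0⟩ := (Matrix.exists_mulVec_eq_zero_iff).mpr hdet
    refine ⟨v, hv, ?_⟩
    rw [Matrix.sub_mulVec, Matrix.smul_mulVec, Matrix.one_mulVec, sub_eq_zero] at hv0
    exact hv0.symm
  · rintro ⟨v, hv, hAv⟩
    refine ⟨A.charpoly_monic.ne_zero, ?_⟩
    rw [← Matrix.exists_mulVec_eq_zero_iff]
    exact ⟨v, hv, by rw [Matrix.sub_mulVec, Matrix.smul_mulVec, Matrix.one_mulVec, hAv,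
      sub_self]⟩

/-- Let `R` be a finite local ring with maximal ideal `M` of order `m`, with `|R| > 2m`.
Then `G_R` is Ramanujan iff `|R| ≥ (m/2 + 1)^2`. -/
theorem stmt_9 (R : Type*) [CommRing R] [IsLocalRing R] [Fintype R] [DecidableEq R]
    (M : Ideal R) (hM : M.IsMaximal) (m : ℕ) (hm : m = Nat.card M)
    (hR : 2 * m < Fintype.card R) :
    IsRamanujan (unitaryCayley R) (Nat.card Rˣ) ↔
      ((m : ℝ) / 2 + 1) ^ 2 ≤ (Fintype.card R : ℝ) := by
  classical
  set n := Fintype.card R with hn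
  set r := Nat.card Rˣ with hrdef
  -- membership in M is being a nonunit
  have hmem : ∀ x : R, x ∈ M ↔ ¬ IsUnit x := by
    intro x
    rw [IsLocalRing.eq_maximalIdeal hM, IsLocalRing.mem_maximalIdeal, mem_nonunits_iff]
  have h0M : (0 : R) ∈ M := M.zero_mem
  -- basic cardinalities
  have hmcard : Fintype.card {x : R // x ∈ M} = m := by
    rw [hm, Nat.card_eq_fintype_card]
  have hmF : (Finset.univ.filter (fun y : R => y ∈ M)).card = m := by
    rw [← hmcard, Fintype.card_subtype]
  have hcoset : ∀ x : R, (Finset.univ.filter (fun y : R => x - y ∈ M)).card = m := by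
    intro x
    rw [← hmF]
    apply Finset.card_bij (fun y _ => x - y)
    · intro a ha
      simp only [Finset.mem_filter, Finset.mem_univ, true_and] at ha ⊢
      exact ha
    · intro a ha b hb hab
      exact sub_right_injective hab
    · intro b hb
      simp only [Finset.mem_filter, Finset.mem_univ, true_and] at hb ⊢
      exact ⟨x - b, by simpa using hb, by ring⟩
  have hunits_card : r + m = n := by
    have e1 : Rˣ ≃ {x : R // IsUnit x} :=
      ⟨fun u => ⟨u, u.isUnit⟩, fun x => x.2.unit, fun u => Units.ext u.isUnit.unit_spec,
        fun x => Subtype.ext x.2.unit_spec⟩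
    have e2 : {x : R // IsUnit x} ≃ {x : R // ¬ x ∈ M} :=
      Equiv.subtypeEquivRight (fun x => by rw [hmem x]; tauto)
    have h1 : r = Fintype.card {x : R // ¬ x ∈ M} := by
      rw [hrdef, Nat.card_eq_fintype_card, Fintype.card_congr (e1.trans e2)]
    rw [h1, Fintype.card_subtype_compl, hmcard, ← hn]
    omega
  have hmpos : 0 < m := by
    rw [hm]
    exact Nat.card_pos
  have hmr : m < r := by omega
  -- adjacency characterization
  have hAdj : ∀ x y : R, (unitaryCayley R).Adj x y ↔ x - y ∉ M := by
    intro x y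
    show x ≠ y ∧ IsUnit (x - y) ↔ x - y ∉ M
    constructor
    · rintro ⟨-, hu⟩ hmm
      exact (hmem _).mp hmm hu
    · intro h
      refine ⟨?_, ?_⟩
      · rintro rfl
        exact h (by simpa using h0M)
      · by_contra hu
        exact h ((hmem _).mpr hu)
  set A := SimpleGraph.adjMatrix ℝ (unitaryCayley R) with hA
  set B : Matrix R R ℝ := Matrix.of fun x z => if x - z ∈ M then (1 : ℝ) else 0 with hB
  set J : Matrix R R ℝ := Matrix.of fun _ _ => (1 : ℝ) with hJ
  have hMtrans : ∀ a b c : R, a - b ∈ M → (b - c ∈ M ↔ a - c ∈ M) := by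
    intro a b c hab
    constructor
    · intro h; have := M.add_mem hab h; simpa [show a - b + (b - c) = a - c by ring] using this
    · intro h; have := M.sub_mem h hab; simpa [show a - c - (a - b) = b - c by ring] using this
  have hsum1 : ∀ x : R, ∑ y, B x y = (m : ℝ) := by
    intro x
    simp only [hB, Matrix.of_apply]
    rw [Finset.sum_boole, hcoset x]
  have hsymmM : ∀ a b : R, a - b ∈ M → b - a ∈ M := by
    intro a b h
    simpa [neg_sub] using neg_mem h
  have hBsymm : ∀ x z : R, B x z = B z x := by
    intro x z
    simp only [hB, Matrix.of_apply]
    by_cases h : x - z ∈ M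
    · rw [if_pos h, if_pos (hsymmM _ _ h)]
    · rw [if_neg h, if_neg (fun h2 => h (hsymmM _ _ h2))]
  have hsum2 : ∀ z : R, ∑ y, B y z = (m : ℝ) := by
    intro z
    rw [show (∑ y, B y z) = ∑ y, B z y from Finset.sum_congr rfl fun y _ => hBsymm y z]
    exact hsum1 z
  have hAJB : A = J - B := by
    ext x z
    simp only [hA, Matrix.sub_apply, hJ, hB, Matrix.of_apply, SimpleGraph.adjMatrix_apply]
    by_cases h : x - z ∈ M
    · rw [if_neg (fun hadj => (hAdj x z).mp hadj h), if_pos h]; norm_num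
    · rw [if_pos ((hAdj x z).mpr h), if_neg h]; norm_num
  have hJJ : J * J = (n : ℝ) • J := by
    ext x z
    simp [hJ, Matrix.mul_apply, hn]
  have hJB : J * B = (m : ℝ) • J := by
    ext x z
    simp only [Matrix.mul_apply, Matrix.smul_apply, hJ, Matrix.of_apply, one_mul, smul_eq_mul,
      mul_one]
    exact hsum2 z
  have hBJ : B * J = (m : ℝ) • J := by
    ext x z
    simp only [Matrix.mul_apply, Matrix.smul_apply, hJ, Matrix.of_apply, mul_one, smul_eq_mul]
    exact hsum1 x
  have hBB : B * B = (m : ℝ) • B := by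
    ext x z
    simp only [Matrix.mul_apply, Matrix.smul_apply, smul_eq_mul]
    by_cases hxz : x - z ∈ M
    · have : ∀ y, B x y * B y z = B x y := by
        intro y
        simp only [hB, Matrix.of_apply]
        by_cases h : x - y ∈ M
        · rw [if_pos h, if_pos ((hMtrans x y z h).mpr hxz), one_mul]
        · rw [if_neg h, zero_mul]
      rw [Finset.sum_congr rfl fun y _ => this y, hsum1 x]
      simp [hB, hxz]
    · rw [Finset.sum_eq_zero, show B x z = 0 by simp [hB, hxz], mul_zero]
      intro y _
      simp only [hB, Matrix.of_apply]
      by_cases h : x - y ∈ M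
      · rw [if_neg (fun h2 => hxz ((hMtrans x y z h).mp h2)), mul_zero]
      · rw [if_neg h, zero_mul]
  have hrn : (r : ℝ) = (n : ℝ) - m := by
    have : (r : ℝ) + m = n := by exact_mod_cast congrArg (Nat.cast (R := ℝ)) hunits_card
    linarith
  have hA2 : A * A = ((n : ℝ) - 2 * m) • J + (m : ℝ) • B := by
    rw [hAJB, sub_mul, mul_sub, mul_sub, hJJ, hJB, hBJ, hBB]
    module
  have hA3 : A * A * A = (((n : ℝ) - 2 * m) * ((n : ℝ) - m) + m * m) • J + (-(m * m) : ℝ) • B := by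
    rw [hA2, hAJB, add_mul, Matrix.smul_mul, Matrix.smul_mul, mul_sub, mul_sub, hJJ, hJB, hBJ,
      hBB]
    module
  have hkey : A * A * A = ((r : ℝ) - m) • (A * A) + ((m : ℝ) * r) • A := by
    rw [hA3, hA2, hAJB, hrn]
    module
  -- classification of eigenvalues
  have hclass : ∀ μ ∈ A.charpoly.roots, μ = 0 ∨ μ = -(m : ℝ) ∨ μ = (r : ℝ) := by
    intro μ hμ
    obtain ⟨v, hv, hAv⟩ := (mem_roots_charpoly_iff A μ).mp hμ
    have h2 : (A * A).mulVec v = (μ ^ 2) • v := by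
      rw [← Matrix.mulVec_mulVec, hAv, Matrix.mulVec_smul, hAv, smul_smul]
      ring_nf
    have h3 : (A * A * A).mulVec v = (μ ^ 3) • v := by
      rw [← Matrix.mulVec_mulVec, hAv, Matrix.mulVec_smul, h2, smul_smul]
      ring_nf
    obtain ⟨i, hi⟩ : ∃ i, v i ≠ 0 := Function.ne_iff.mp hv
    have heq : μ ^ 3 * v i = (((r : ℝ) - m) * μ ^ 2 + (m : ℝ) * r * μ) * v i := by
      have := congrFun (congrArg Matrix.mulVec hkey) v
      rw [h3, Matrix.add_mulVec, Matrix.smul_mulVec, Matrix.smul_mulVec, h2, hAv] at this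
      have := congrFun this i
      simp only [Pi.smul_apply, Pi.add_apply, smul_eq_mul] at this
      rw [this]; ring
    have hpoly : μ * (μ + m) * (μ - r) = 0 := by
      have h' : μ ^ 3 = ((r : ℝ) - m) * μ ^ 2 + (m : ℝ) * r * μ :=
        mul_right_cancel₀ hi heq
      nlinarith [h']
    rcases mul_eq_zero.mp hpoly with h | h
    · rcases mul_eq_zero.mp h with h | h
      · exact Or.inl h
      · exact Or.inr (Or.inl (by linarith))
    · exact Or.inr (Or.inr (by linarith))
  -- -m is a root
  have hneg_root : (-(m : ℝ)) ∈ A.charpoly.roots := by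
    obtain ⟨x₀, hx₀⟩ : ∃ x : R, x ∉ M := by
      by_contra h
      push_neg at h
      exact hM.ne_top ((Ideal.eq_top_iff_one M).mpr (h 1))
    set v : R → ℝ := fun y => if y ∈ M then 1 else if y - x₀ ∈ M then -1 else 0 with hv
    refine (mem_roots_charpoly_iff A _).mpr ⟨v, ?_, ?_⟩
    · intro h
      have := congrFun h 0
      simp [hv, h0M] at this
    · funext z
      have hdisj : ∀ y : R, y ∈ M → y - x₀ ∉ M := by
        intro y hy hyx
        exact hx₀ (by simpa [show y - (y - x₀) = x₀ by ring] using M.sub_mem hy hyx)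
      have hvsplit : ∀ y : R, v y = (if y ∈ M then (1:ℝ) else 0) - (if y - x₀ ∈ M then 1 else 0) := by
        intro y
        simp only [hv]
        by_cases h1 : y ∈ M
        · rw [if_pos h1, if_pos h1, if_neg (hdisj y h1)]; norm_num
        · rw [if_neg h1, if_neg h1]
          by_cases h2 : y - x₀ ∈ M <;> simp [h2]
      have hsumv : ∑ y, v y = 0 := by
        rw [Finset.sum_congr rfl fun y _ => hvsplit y, Finset.sum_sub_distrib,
          Finset.sum_boole, Finset.sum_boole, hmF]
        have : (Finset.univ.filter (fun y : R => y - x₀ ∈ M)).card = m := by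
          rw [← hcoset x₀]
          congr 1
          ext y
          simp only [Finset.mem_filter, Finset.mem_univ, true_and]
          have : x₀ - y = -(y - x₀) := by ring
          rw [this, neg_mem_iff]
        rw [this]
        ring
      have hvconst : ∀ z y : R, z - y ∈ M → v y = v z := by
        intro z y hzy
        simp only [hv]
        have e1 : y ∈ M ↔ z ∈ M := by
          have := hMtrans z y 0 hzy
          simpa using this
        have e2 : y - x₀ ∈ M ↔ z - x₀ ∈ M := hMtrans z y x₀ hzy
        by_cases h1 : y ∈ M
        · rw [if_pos h1, if_pos (e1.mp h1)]
        · rw [if_neg h1, if_neg (fun h => h1 (e1.mpr h))]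
          by_cases h2 : y - x₀ ∈ M
          · rw [if_pos h2, if_pos (e2.mp h2)]
          · rw [if_neg h2, if_neg (fun h => h2 (e2.mpr h))]
      have : A.mulVec v z = ∑ y, (1 - B z y) * v y := by
        simp only [Matrix.mulVec, dotProduct]
        apply Finset.sum_congr rfl
        intro y _
        rw [hAJB]
        simp [hJ]
      rw [this]
      have : ∑ y, (1 - B z y) * v y = (∑ y, v y) - ∑ y, B z y * v y := by
        rw [← Finset.sum_sub_distrib]
        apply Finset.sum_congr rfl
        intro y _
        ring
      rw [this, hsumv]
      have hBzv : ∀ y : R, B z y * v y = B z y * v z := by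
        intro y
        simp only [hB, Matrix.of_apply]
        by_cases h : z - y ∈ M
        · rw [if_pos h, hvconst z y h]
        · rw [if_neg h, zero_mul, zero_mul]
      rw [Finset.sum_congr rfl fun y _ => hBzv y, ← Finset.sum_mul, hsum1 z]
      simp only [Pi.smul_apply, smul_eq_mul]
      ring
  -- final equivalence
  have hr1 : 1 ≤ r := by omega
  constructor
  · intro hRam
    have hmne : |(-(m : ℝ))| ≠ (r : ℝ) := by
      rw [abs_neg, abs_of_nonneg (by positivity)]
      exact_mod_cast Nat.ne_of_lt hmr
    have hle := hRam _ hneg_root hmne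
    rw [abs_neg, abs_of_nonneg (by positivity)] at hle
    have hrr : (1 : ℝ) ≤ (r : ℝ) := by exact_mod_cast hr1
    have hsq : (m : ℝ) ^ 2 ≤ 4 * ((r : ℝ) - 1) := by
      nlinarith [Real.sq_sqrt (show (0:ℝ) ≤ (r : ℝ) - 1 by linarith),
        Real.sqrt_nonneg ((r : ℝ) - 1), hle]
    have hn' : (n : ℝ) = (r : ℝ) + m := by linarith [hrn]
    nlinarith [hsq]
  · intro hineq μ hμ hne
    have hn' : (n : ℝ) = (r : ℝ) + m := by linarith [hrn]
    have hsq : ((m : ℝ) / 2) ^ 2 ≤ (r : ℝ) - 1 := by nlinarith [hineq]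
    have hrr : (1 : ℝ) ≤ (r : ℝ) := by exact_mod_cast hr1
    rcases hclass μ hμ with h | h | h
    · rw [h, abs_zero]
      positivity
    · rw [h, abs_neg, abs_of_nonneg (by positivity)]
      have h2 : (m : ℝ) / 2 ≤ Real.sqrt ((r : ℝ) - 1) := by
        exact (Real.le_sqrt (by positivity) (by linarith)).mpr hsq
      linarith
    · exfalso
      apply hne
      rw [h, abs_of_nonneg (by positivity)]
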